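/- There exists an incomplete table T over a schema R with attribute sets X, Y ⊆ R such that T satisfies the strongly possible multivalued dependency X ↠_sp Y but T violates Lien's null multivalued dependency (NMVD) X ↠ Y. -/
import Mathlib


/- Common framework: incomplete tables, strongly possible worlds and constraints.
   A tuple assigns each attribute a value in `Option V`, with `none` encoding the
   null marker ⊥.  In the degenerate case of an attribute whose active domain is
   empty, the fresh symbol `s` (outside all domains) is encoded by `none` in the
   strongly possible world: it is a single fixed symbol, equal only to itself and
   different from every domain value, exactly as `none` behaves. -/

namespace SPDB

variable {α V : Type} [DecidableEq α] [DecidableEq V]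

/-- A tuple over attribute type `α` with values in `V`; `none` is the null ⊥. -/
abbrev Tuple (α V : Type) := α → Option V

/-- An incomplete table: a finite multiset of tuples. -/
abbrev Table (α V : Type) := Multiset (Tuple α V)

/-- The active domain of attribute `A` in table `T`: the non-null values in column `A`. -/
def VD (T : Table α V) (A : α) : Finset V :=
  (T.filterMap fun t => t A).toFinset

/-- `t'` is a strongly possible extension of `t` w.r.t. the active domains of `T`:
non-null entries are kept, each null is replaced by an active domain value
(by the fresh symbol, encoded `none`, if the active domain is empty). -/
def spExt (T : Table α V) (t t' : Tuple α V) : Prop :=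
  ∀ A, (t A ≠ none → t' A = t A) ∧
       (t A = none → if (VD T A).Nonempty then ∃ v ∈ VD T A, t' A = some v
                     else t' A = none)

/-- `T'` is a strongly possible world of `T`. -/
def spWorld (T T' : Table α V) : Prop := Multiset.Rel (spExt T) T T'

/-- Two tuples agree on the attribute set `X`. -/
def agrees (X : Finset α) (t1 t2 : Tuple α V) : Prop := ∀ A ∈ X, t1 A = t2 A

/-- Weak similarity on the attribute set `X`. -/
def weakSim (X : Finset α) (t1 t2 : Tuple α V) : Prop :=
  ∀ A ∈ X, t1 A = t2 A ∨ t1 A = none ∨ t2 A = none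

/-- `t` is `X`-total: no nulls among the attributes of `X`. -/
def isTotal (X : Finset α) (t : Tuple α V) : Prop := ∀ A ∈ X, t A ≠ none

instance (X : Finset α) : DecidablePred (isTotal (V := V) X) := fun t =>
  decidable_of_iff (∀ A ∈ X, t A ≠ none) Iff.rfl

/-- Projection of a tuple to the attribute set `X` (nulls outside `X`). -/
def proj (X : Finset α) (t : Tuple α V) : Tuple α V :=
  fun A => if A ∈ X then t A else none

/-- A (complete) table satisfies the key `K`: tuple occurrences are pairwise distinct on `K`. -/
def keyOn (K : Finset α) (T' : Table α V) : Prop := (T'.map (proj K)).Nodup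

/-- A (complete) table satisfies the functional dependency `X → Y`. -/
def FD (X Y : Finset α) (T' : Table α V) : Prop :=
  ∀ t1 ∈ T', ∀ t2 ∈ T', agrees X t1 t2 → agrees Y t1 t2

/-- A (complete) table over schema `R` satisfies the multivalued dependency `X ↠ Y`. -/
def MVD (R X Y : Finset α) (T' : Table α V) : Prop :=
  ∀ t1 ∈ T', ∀ t2 ∈ T', agrees X t1 t2 →
    ∃ t ∈ T', agrees (X ∪ Y) t t1 ∧ agrees (X ∪ (R \ Y)) t t2

/-- A (complete) table satisfies the cross join `X × Y`. -/
def CJ (X Y : Finset α) (T' : Table α V) : Prop :=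
  ∀ t1 ∈ T', ∀ t2 ∈ T', ∃ t ∈ T', agrees X t t1 ∧ agrees Y t t2

/-- `K` is a strongly possible key of `T`: `sp⟨K⟩`. -/
def spKey (T : Table α V) (K : Finset α) : Prop :=
  ∃ T', spWorld T T' ∧ keyOn K T'

/-- The strongly possible functional dependency `X →_sp Y` holds in `T`. -/
def spFD (T : Table α V) (X Y : Finset α) : Prop :=
  ∃ T', spWorld T T' ∧ FD X Y T'

/-- The strongly possible multivalued dependency `X ↠_sp Y` holds in `T` over schema `R`. -/
def spMVD (R : Finset α) (T : Table α V) (X Y : Finset α) : Prop :=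
  ∃ T', spWorld T T' ∧ MVD R X Y T'

/-- The strongly possible cross join `X ×_sp Y` holds in `T`. -/
def spCJ (T : Table α V) (X Y : Finset α) : Prop :=
  ∃ T', spWorld T T' ∧ CJ X Y T'

/-- Lien's null multivalued dependency `X ↠ Y` over schema `R`. -/
def NMVD (R : Finset α) (T : Table α V) (X Y : Finset α) : Prop :=
  ∀ t1 ∈ T, ∀ t2 ∈ T, isTotal X t1 → isTotal X t2 → agrees X t1 t2 →
    ∃ t ∈ T, agrees (X ∪ Y) t t1 ∧ agrees (X ∪ (R \ Y)) t t2

/-- The minimum number of tuples whose removal from `T` makes `P` hold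
(`T = T₀ + S` means that `S` is a submultiset of `T` and `T₀ = T ∖ S`). -/
noncomputable def g3Card (T : Table α V) (P : Table α V → Prop) : ℕ :=
  sInf {n : ℕ | ∃ T₀ S : Table α V, T = T₀ + S ∧ P T₀ ∧ Multiset.card S = n}

/-- `g3`: the minimum, over submultisets `S` of `T` whose removal makes the
constraint `P` hold, of `|S|/|T|`. -/
noncomputable def g3 (T : Table α V) (P : Table α V → Prop) : ℚ :=
  (g3Card T P : ℚ) / (Multiset.card T : ℚ)

/-- The minimum number of tuples whose addition to `T` makes `P` hold. -/
noncomputable def g5Card (T : Table α V) (P : Table α V → Prop) : ℕ :=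
  sInf {n : ℕ | ∃ S : Table α V, P (T + S) ∧ Multiset.card S = n}

/-- `g5`: the minimum, over finite multisets `S` of tuples whose addition makes
the constraint `P` hold, of `|S|/|T|`. -/
noncomputable def g5 (T : Table α V) (P : Table α V → Prop) : ℚ :=
  (g5Card T P : ℚ) / (Multiset.card T : ℚ)

end SPDB


namespace SPDBNE

def ta : SPDB.Tuple ℕ ℕ := fun A => match A with
  | 0 => some 1 | 1 => some 1 | 2 => some 2 | _ => none

def tb : SPDB.Tuple ℕ ℕ := fun A => match A with
  | 0 => some 1 | 1 => some 2 | _ => none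

def tb' : SPDB.Tuple ℕ ℕ := fun A => match A with
  | 0 => some 1 | 1 => some 2 | 2 => some 2 | _ => none

def T : SPDB.Table ℕ ℕ := {ta, tb}

lemma vd_empty (n : ℕ) : SPDB.VD T (n+3) = ∅ := by
  apply Finset.eq_empty_of_forall_notMem
  intro v hv
  simp only [SPDB.VD, Multiset.mem_toFinset, Multiset.mem_filterMap] at hv
  obtain ⟨t, ht, hv⟩ := hv
  have : t = ta ∨ t = tb := by
    simpa [T, Multiset.insert_eq_cons] using ht
  rcases this with rfl | rfl <;> simp [ta, tb] at hv

lemma two_mem : (2 : ℕ) ∈ SPDB.VD T 2 :=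
  Multiset.mem_toFinset.mpr ((Multiset.mem_filterMap _ _).mpr
    ⟨ta, by simp [T, Multiset.insert_eq_cons], rfl⟩)

end SPDBNE

open SPDB SPDBNE in
/-- there is a table satisfying the spMVD `X ↠_sp Y` but violating
Lien's NMVD `X ↠ Y`. -/
theorem statement13 :
    ∃ (R X Y : Finset ℕ) (T : Table ℕ ℕ), X ⊆ R ∧ Y ⊆ R ∧
      spMVD R T X Y ∧ ¬ NMVD R T X Y := by
  refine ⟨{0,1,2}, {0}, {1}, SPDBNE.T, by decide, by decide, ?_, ?_⟩
  · refine ⟨{ta, tb'}, ?_, ?_⟩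
    · show Multiset.Rel _ (ta ::ₘ tb ::ₘ 0) (ta ::ₘ tb' ::ₘ 0)
      refine Multiset.Rel.cons ?_ (Multiset.Rel.cons ?_ Multiset.Rel.zero)
      · intro A
        refine ⟨fun _ => rfl, fun h => ?_⟩
        match A with
        | 0 => simp [ta] at h
        | 1 => simp [ta] at h
        | 2 => simp [ta] at h
        | (n+3) =>
          rw [vd_empty n]
          simp [ta]
      · intro A
        refine ⟨fun h => ?_, fun h => ?_⟩
        · match A with
          | 0 => rfl
          | 1 => rfl
          | 2 => simp [tb] at h
          | (n+3) => simp [tb] at h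
        · match A with
          | 0 => simp [tb] at h
          | 1 => simp [tb] at h
          | 2 =>
            rw [if_pos ⟨2, two_mem⟩]
            exact ⟨2, two_mem, rfl⟩
          | (n+3) =>
            rw [vd_empty n]
            simp [tb']
    · intro t1 h1 t2 h2 _
      simp only [Multiset.insert_eq_cons, Multiset.mem_cons, Multiset.mem_singleton,
        Multiset.notMem_zero, or_false] at h1 h2
      have mta : ta ∈ ({ta, tb'} : Table ℕ ℕ) := by simp
      have mtb : tb' ∈ ({ta, tb'} : Table ℕ ℕ) := by simp
      rcases h1 with rfl | rfl <;> rcases h2 with rfl | rfl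
      · exact ⟨ta, mta, fun A hA => rfl, fun A hA => rfl⟩
      · refine ⟨ta, mta, fun A hA => rfl, fun A hA => ?_⟩
        fin_cases hA <;> rfl
      · refine ⟨tb', mtb, fun A hA => rfl, fun A hA => ?_⟩
        fin_cases hA <;> rfl
      · exact ⟨tb', mtb, fun A hA => rfl, fun A hA => rfl⟩
  · intro h
    have mta : ta ∈ SPDBNE.T := by simp [T, Multiset.insert_eq_cons]
    have mtb : tb ∈ SPDBNE.T := by simp [T, Multiset.insert_eq_cons]
    obtain ⟨t, ht, hA, hB⟩ := h ta mta tb mtb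
      (fun A hA => by fin_cases hA <;> simp [ta])
      (fun A hA => by fin_cases hA <;> simp [tb])
      (fun A hA => by fin_cases hA <;> rfl)
    have : t = ta ∨ t = tb := by
      simpa [T, Multiset.insert_eq_cons] using ht
    rcases this with rfl | rfl
    · have := hB 2 (by decide)
      simp [ta, tb] at this
    · have := hA 1 (by decide)
      simp [ta, tb] at this
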